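/- Let X be a flow space for G and γ > 0 such that every point of X has G-period at most γ. Let ℱ be a family of subgroups, let c ∈ X, and let U be an open ℱ-neighborhood of the flow line Φ_ℝ(c). Then there exists an open ℱ-neighborhood V ⊆ U of Φ_ℝ(c) that is invariant under the flow. (Concretely, V = U \ Φ_ℝ(X \ GU) works, using Φ_ℝ C = Φ_{[0,γ]} C for G-invariant closed C.) -/

import Mathlib

open Pointwise

theorem aux_periodic {S : Set ℝ} {t' γ : ℝ} (ht'0 : 0 < t') (ht'γ : t' ≤ γ)
    (hwin : Set.Icc 0 γ ⊆ S) (hstep : ∀ t : ℝ, t ∈ S ↔ t + t' ∈ S) : ∀ t : ℝ, t ∈ S := by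
  have hiter : ∀ n : ℤ, ∀ t : ℝ, t ∈ S ↔ t + n * t' ∈ S := by
    intro n
    induction n using Int.induction_on with
    | zero => simp
    | succ k ih =>
      intro t
      have h : t + ((k : ℤ) + 1 : ℤ) * t' = (t + (k : ℤ) * t') + t' := by push_cast; ring
      rw [h, ← hstep, ← ih]
    | pred k ih =>
      intro t
      have h : (t + ((-(k : ℤ) - 1 : ℤ) : ℝ) * t') + t' = t + ((-(k : ℤ) : ℤ) : ℝ) * t' := by
        push_cast; ring
      rw [ih, ← h, ← hstep]
  intro t
  obtain ⟨n, r, hr0, hrt, hrt'⟩ : ∃ n : ℤ, ∃ r : ℝ, 0 ≤ r ∧ r < t' ∧ t = r + n * t' := by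
    refine ⟨⌊t / t'⌋, t - ⌊t / t'⌋ * t', ?_, ?_, by ring⟩
    · have := (le_div_iff₀ ht'0).mp (Int.floor_le (t / t'))
      linarith
    · have := (div_lt_iff₀ ht'0).mp (Int.lt_floor_add_one (t / t'))
      linarith
  rw [hrt', ← hiter]
  exact hwin ⟨hr0, hrt.le.trans ht'γ⟩

theorem stmt14 {G X : Type*} [Group G] [MetricSpace X] [MulAction G X] [AddAction ℝ X]
    (hiso : ∀ g : G, Isometry (fun x : X => g • x))
    (hproper : ∀ K : Set X, IsCompact K → {g : G | (K ∩ g • K).Nonempty}.Finite)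
    (hflowcont : Continuous fun p : ℝ × X => p.1 +ᵥ p.2)
    (hcomm : ∀ (g : G) (t : ℝ) (x : X), t +ᵥ (g • x) = g • (t +ᵥ x))
    (γ : ℝ) (hγ : 0 < γ)
    -- every point of X has G-period at most γ
    (hperiod : ∀ x : X, ∃ g : G, ∃ t : ℝ, 0 < t ∧ t ≤ γ ∧ t +ᵥ x = g • x)
    -- a family of subgroups: closed under conjugation and under subgroups
    (F : Set (Subgroup G))
    (hFconj : ∀ H ∈ F, ∀ g : G, Subgroup.map (MulAut.conj g).toMonoidHom H ∈ F)
    (hFsub : ∀ H ∈ F, ∀ H' : Subgroup G, H' ≤ H → H' ∈ F)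
    (c : X)
    -- U is an open F-neighborhood of the flow line through c
    (U : Set X) (hUopen : IsOpen U)
    (hUnbhd : (Set.range fun t : ℝ => t +ᵥ c) ⊆ U)
    (hUF : ∀ g : G, ((g • U) ∩ U).Nonempty → g • U = U)
    (hUstab : MulAction.stabilizer G U ∈ F) :
    ∃ V : Set X, IsOpen V ∧ V ⊆ U ∧
      (Set.range fun t : ℝ => t +ᵥ c) ⊆ V ∧
      (∀ (t : ℝ), ∀ x ∈ V, t +ᵥ x ∈ V) ∧
      (∀ g : G, ((g • V) ∩ V).Nonempty → g • V = V) ∧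
      MulAction.stabilizer G V ∈ F := by
  classical
  -- W = union of all translates of U
  set W : Set X := ⋃ g : G, g • U with hWdef
  have hsmulopen : ∀ (g : G) (S : Set X), IsOpen S → IsOpen (g • S) := by
    intro g S hS
    have : g • S = (fun x : X => g⁻¹ • x) ⁻¹' S := by
      ext x
      simp [Set.mem_smul_set_iff_inv_smul_mem]
    rw [this]
    exact hS.preimage (hiso g⁻¹).continuous
  have hWopen : IsOpen W := isOpen_iUnion fun g => hsmulopen g U hUopen
  have hUW : U ⊆ W := by
    intro x hx
    exact Set.mem_iUnion.mpr ⟨1, by simpa using hx⟩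
  -- W is G-invariant
  have hWG : ∀ (g : G) (y : X), g • y ∈ W ↔ y ∈ W := by
    intro g y
    constructor
    · rintro hy
      rw [Set.mem_iUnion] at hy ⊢
      obtain ⟨h, hh⟩ := hy
      refine ⟨g⁻¹ * h, ?_⟩
      rw [Set.mem_smul_set_iff_inv_smul_mem] at hh ⊢
      rwa [mul_inv_rev, inv_inv, mul_smul]
    · rintro hy
      rw [Set.mem_iUnion] at hy ⊢
      obtain ⟨h, hh⟩ := hy
      refine ⟨g * h, ?_⟩
      rw [Set.mem_smul_set_iff_inv_smul_mem] at hh ⊢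
      rwa [mul_inv_rev, mul_smul, inv_smul_smul]
  -- the flow map with fixed point is continuous
  have hcont1 : ∀ x : X, Continuous fun s : ℝ => s +ᵥ x := by
    intro x
    exact hflowcont.comp (continuous_id.prodMk continuous_const)
  -- define V
  set P : Set X := {x : X | ∀ s ∈ Set.Icc (0:ℝ) γ, s +ᵥ x ∈ W} with hPdef
  set V : Set X := U ∩ P with hVdef
  -- any point of P has its whole flow orbit in W
  have horbW : ∀ x ∈ P, ∀ t : ℝ, t +ᵥ x ∈ W := by
    intro x hx
    obtain ⟨g, t', ht'0, ht'γ, heq⟩ := hperiod x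
    have hstep : ∀ t : ℝ, (t +ᵥ x ∈ W) ↔ ((t + t') +ᵥ x ∈ W) := by
      intro t
      have : (t + t') +ᵥ x = g • (t +ᵥ x) := by
        rw [add_vadd, heq, hcomm]
      rw [this, hWG]
    exact aux_periodic ht'0 ht'γ (fun s hs => hx s hs) hstep
  -- points of V have whole flow orbit in U (connectedness argument)
  have horbU : ∀ x ∈ V, ∀ t : ℝ, t +ᵥ x ∈ U := by
    intro x hx
    obtain ⟨hxU, hxP⟩ := hx
    set S : Set ℝ := {t : ℝ | t +ᵥ x ∈ U} with hSdef
    have hSopen : IsOpen S := hUopen.preimage (hcont1 x)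
    have hSclosed : IsClosed S := by
      rw [← closure_subset_iff_isClosed]
      intro t ht
      have htW : t +ᵥ x ∈ W := horbW x hxP t
      rw [Set.mem_iUnion] at htW
      obtain ⟨h, hh⟩ := htW
      set O : Set ℝ := {s : ℝ | s +ᵥ x ∈ h • U} with hOdef
      have hOopen : IsOpen O := (hsmulopen h U hUopen).preimage (hcont1 x)
      have htO : t ∈ O := hh
      obtain ⟨s, hsO, hsS⟩ : (O ∩ S).Nonempty := by
        rcases mem_closure_iff.mp ht O hOopen htO with ⟨s, hs1, hs2⟩
        exact ⟨s, hs1, hs2⟩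
      have : (h • U ∩ U).Nonempty := ⟨s +ᵥ x, hsO, hsS⟩
      have hhU : h • U = U := hUF h this
      show t +ᵥ x ∈ U
      rwa [hhU] at hh
    have hSne : S.Nonempty := ⟨0, show (0:ℝ) +ᵥ x ∈ U by rwa [zero_vadd]⟩
    have : S = Set.univ := (IsClopen.eq_univ ⟨hSclosed, hSopen⟩ hSne)
    intro t
    have : t ∈ S := this ▸ Set.mem_univ t
    exact this
  -- P is G-invariant, so g • V = (g • U) ∩ P
  have hPG : ∀ (g : G) (x : X), g • x ∈ P ↔ x ∈ P := by
    intro g x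
    constructor
    · intro hx s hs
      have := hx s hs
      rw [hcomm, hWG] at this
      exact this
    · intro hx s hs
      rw [hcomm, hWG]
      exact hx s hs
  have hVsmul : ∀ g : G, g • V = (g • U) ∩ P := by
    intro g
    ext x
    constructor
    · intro hx
      rw [Set.mem_smul_set_iff_inv_smul_mem] at hx
      exact ⟨Set.mem_smul_set_iff_inv_smul_mem.mpr hx.1, (hPG g⁻¹ x).mp hx.2⟩
    · rintro ⟨h1, h2⟩
      rw [Set.mem_smul_set_iff_inv_smul_mem]
      exact ⟨Set.mem_smul_set_iff_inv_smul_mem.mp h1, (hPG g⁻¹ x).mpr h2⟩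
  -- P is open by the tube lemma
  have hPopen : IsOpen P := by
    rw [isOpen_iff_forall_mem_open]
    intro x hx
    have hsub : Set.Icc (0:ℝ) γ ×ˢ ({x} : Set X) ⊆ (fun p : ℝ × X => p.1 +ᵥ p.2) ⁻¹' W := by
      rintro ⟨s, y⟩ ⟨hs, hy⟩
      rw [Set.mem_singleton_iff] at hy
      subst hy
      exact hx s hs
    obtain ⟨u, v, _, hv, hKu, hxv, huv⟩ :=
      generalized_tube_lemma isCompact_Icc isCompact_singleton
        (hWopen.preimage hflowcont) hsub
    exact ⟨v, fun y hy s hs => huv (Set.mk_mem_prod (hKu hs) hy), hv, hxv rfl⟩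
  -- the flow line through c is contained in V
  have hLV : (Set.range fun t : ℝ => t +ᵥ c) ⊆ V := by
    rintro y ⟨t, rfl⟩
    refine ⟨hUnbhd ⟨t, rfl⟩, fun s hs => ?_⟩
    have : (s + t) +ᵥ c ∈ U := hUnbhd ⟨s + t, rfl⟩
    rw [add_vadd] at this
    exact hUW this
  have hcV : c ∈ V := by
    have : (0:ℝ) +ᵥ c ∈ V := hLV ⟨0, rfl⟩
    rwa [zero_vadd] at this
  refine ⟨V, hUopen.inter hPopen, Set.inter_subset_left, hLV, ?_, ?_, ?_⟩
  · -- flow invariance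
    intro t x hx
    refine ⟨horbU x hx t, fun s hs => ?_⟩
    rw [← add_vadd]
    exact horbW x hx.2 (s + t)
  · -- F-subset property
    rintro g ⟨y, hy1, hy2⟩
    rw [hVsmul g] at hy1 ⊢
    have hgU : g • U = U := hUF g ⟨y, hy1.1, hy2.1⟩
    rw [hgU]
  · -- stabilizer in F
    refine hFsub _ hUstab _ fun g hg => ?_
    rw [MulAction.mem_stabilizer_iff] at hg ⊢
    refine hUF g ⟨c, ?_, hcV.1⟩
    have : c ∈ g • V := by rw [hg]; exact hcV
    rw [hVsmul g] at this
    exact this.1
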